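/- arXiv:1811.11560 — 3 statements merged into one kernel-verified Lean document; each statement's English description precedes it below -/
import Mathlib

section
/- Let $q_0(z) = \frac{1}{4}(z^5 - z^4 + z^2 - z)$. Then $\sup_{z \in \overline{\mathbb{D}}} |q_0(z)| < 1$, where $\overline{\mathbb{D}} = \{z \in \mathbb{C} : |z| \le 1\}$ is the closed unit disc. -/
noncomputable def q0 (z : ℂ) : ℂ := (z ^ 5 - z ^ 4 + z ^ 2 - z) / 4

lemma key_real (x y : ℝ) (h : x^2 + y^2 ≤ 1) :
    (1 - x) * (1 + (x^3 - 3*x*y^2)) ≤ 81/25 := by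
  rcases le_or_gt x 0 with hx | hx
  · have hb : (1 - x^2) * (2*x-1)^2 ≤ 81/25 := by
      nlinarith [sq_nonneg (x + 3/5), sq_nonneg (x^2 + x), sq_nonneg (2*x+1), sq_nonneg x, sq_nonneg (x^2 + (3/5)*x - 1/2)]
    nlinarith [mul_nonneg (mul_nonneg (neg_nonneg.2 hx) (by linarith : (0:ℝ) ≤ 1 - x)) (by linarith : (0:ℝ) ≤ 1 - x^2 - y^2)]
  · nlinarith [sq_nonneg y, mul_nonneg hx.le (sq_nonneg y), sq_nonneg (1-x), mul_nonneg (mul_nonneg hx.le hx.le) hx.le]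

lemma key (z : ℂ) (hz : ‖z‖ ≤ 1) : ‖q0 z‖ ≤ 9/10 := by
  set x := z.re with hxdef
  set y := z.im with hydef
  have hxy : x^2 + y^2 ≤ 1 := by
    have h1 : (‖z‖)^2 ≤ 1 := by nlinarith [norm_nonneg z]
    rw [Complex.sq_norm, Complex.normSq_apply] at h1
    nlinarith
  have h1 : ‖z - 1‖ ^ 2 ≤ 2 - 2*x := by
    rw [Complex.sq_norm, Complex.normSq_apply]
    simp only [Complex.sub_re, Complex.sub_im, Complex.one_re, Complex.one_im, ← hxdef, ← hydef]
    nlinarith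
  have h2 : ‖z^3 + 1‖ ^ 2 ≤ 2 + 2*(x^3 - 3*x*y^2) := by
    rw [Complex.sq_norm, Complex.normSq_apply]
    simp only [Complex.add_re, Complex.add_im, Complex.one_re, Complex.one_im,
      pow_succ, pow_zero, one_mul, Complex.mul_re, Complex.mul_im, ← hxdef, ← hydef]
    nlinarith [sq_nonneg (x^2+y^2), sq_nonneg (x^2+y^2+1), sq_nonneg (x^2+y^2-1)]
  have hk := key_real x y hxy
  have hfac : q0 z = z * (z - 1) * (z^3 + 1) / 4 := by unfold q0; ring
  rw [hfac, norm_div, norm_mul, norm_mul]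
  have h4 : ‖(4:ℂ)‖ = 4 := by simp
  rw [h4]
  rw [div_le_iff₀ (by norm_num : (0:ℝ) < 4)]
  have hA := norm_nonneg (z - 1)
  have hB := norm_nonneg (z^3 + 1)
  have hprod : (‖z - 1‖ * ‖z^3 + 1‖)^2 ≤ (18/5)^2 := by
    have := mul_le_mul h1 h2 (by positivity) (by nlinarith)
    nlinarith
  have hprod' : ‖z - 1‖ * ‖z^3 + 1‖ ≤ 18/5 := by
    nlinarith [mul_nonneg hA hB]
  have hz0 := norm_nonneg z
  calc ‖z‖ * ‖z - 1‖ * ‖z^3 + 1‖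
      ≤ 1 * (‖z - 1‖ * ‖z^3 + 1‖) := by
        rw [mul_assoc]; exact mul_le_mul_of_nonneg_right hz (mul_nonneg hA hB)
    _ ≤ 18/5 := by rw [one_mul]; exact hprod'
    _ = 9/10 * 4 := by norm_num

theorem stmt_0 :
    (⨆ z : Metric.closedBall (0 : ℂ) 1, ‖q0 z‖) < 1 := by
  haveI : Nonempty (Metric.closedBall (0 : ℂ) 1) := ⟨⟨0, by simp⟩⟩
  have h : (⨆ z : Metric.closedBall (0 : ℂ) 1, ‖q0 z‖) ≤ 9/10 := by
    apply ciSup_le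
    intro z
    apply key
    have h2 := Metric.mem_closedBall.mp z.2
    rwa [Complex.dist_eq, sub_zero] at h2
  linarith
end

section
/- Let $p$ be a complex polynomial with $|p|_1 = 1$, $\deg p = d$, and define $w_{l+1}(z) = w_l(z) \cdot w_0(z^{4\deg w_l + 1})$ with $w_0 = p$. Then for every $l$, $|w_l|_1 = 1$, $w_l(1) = p(1)^{l+1}$, and $\sup_{x \in [-1,1]} |w_l(x)| \le \left(\sup_{x \in [-1,1]} |p(x)|\right)^{l+1}$. -/
open Polynomial

/-- The sum of the absolute values of the coefficients of a polynomial. -/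
noncomputable def l1 (f : Polynomial ℂ) : ℝ := ∑ k ∈ f.support, ‖f.coeff k‖

lemma l1_eq_sum (f : Polynomial ℂ) (s : Finset ℕ) (hs : f.support ⊆ s) :
    l1 f = ∑ k ∈ s, ‖f.coeff k‖ := by
  refine Finset.sum_subset hs fun k _ hk => ?_
  rw [Polynomial.notMem_support_iff.mp hk, norm_zero]

lemma coeff_mul_comp_X_pow (f p : Polynomial ℂ) (n : ℕ) (h : f.natDegree < n) (k : ℕ) :
    (f * p.comp (X ^ n)).coeff k = f.coeff (k % n) * p.coeff (k / n) := by
  have hn : 0 < n := lt_of_le_of_lt (Nat.zero_le _) h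
  have hcomp : p.comp ((X : Polynomial ℂ) ^ n) =
      ∑ e ∈ p.support, C (p.coeff e) * X ^ (n * e) := by
    rw [Polynomial.comp, Polynomial.eval₂_eq_sum, Polynomial.sum]
    refine Finset.sum_congr rfl fun e _ => ?_
    rw [← pow_mul]
  rw [hcomp, Finset.mul_sum, Polynomial.finset_sum_coeff]
  have hterm : ∀ e, (f * (C (p.coeff e) * X ^ (n * e))).coeff k =
      if n * e ≤ k then p.coeff e * f.coeff (k - n * e) else 0 := by
    intro e
    rw [show f * (C (p.coeff e) * X ^ (n * e)) = C (p.coeff e) * f * X ^ (n * e) by ring,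
      Polynomial.coeff_mul_X_pow']
    split_ifs with h'
    · rw [Polynomial.coeff_C_mul]
    · rfl
  rw [Finset.sum_congr rfl fun e _ => hterm e]
  rw [Finset.sum_eq_single (k / n)]
  · have hle : n * (k / n) ≤ k := by
      rw [mul_comm]; exact Nat.div_mul_le_self k n
    rw [if_pos hle]
    have hmod : k - n * (k / n) = k % n := by
      have := Nat.mod_add_div k n
      omega
    rw [hmod, mul_comm]
  · intro e he hne
    split_ifs with h'
    · rcases eq_or_ne (f.coeff (k - n * e)) 0 with h0 | h0
      · rw [h0, mul_zero]
      · exfalso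
        apply hne
        have hlt : k - n * e ≤ f.natDegree := Polynomial.le_natDegree_of_ne_zero h0
        have hk2 : k < (e + 1) * n := by
          have : k - n * e < n := lt_of_le_of_lt hlt h
          nlinarith [Nat.sub_add_cancel h']
        have hk1 : e * n ≤ k := by rw [mul_comm]; exact h'
        exact (Nat.div_eq_of_lt_le hk1 hk2).symm
    · rfl
  · intro hnot
    rw [Polynomial.notMem_support_iff.mp hnot, zero_mul]
    split_ifs <;> rfl

lemma l1_mul_comp (f p : Polynomial ℂ) (n : ℕ) (h : f.natDegree < n) :
    l1 (f * p.comp (X ^ n)) = l1 f * l1 p := by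
  have hn : 0 < n := lt_of_le_of_lt (Nat.zero_le _) h
  set T := (f.support ×ˢ p.support).image (fun ij : ℕ × ℕ => ij.1 + n * ij.2) with hT
  have hsub : (f * p.comp (X ^ n)).support ⊆ T := by
    intro k hk
    rw [Polynomial.mem_support_iff, coeff_mul_comp_X_pow f p n h] at hk
    have h1 : f.coeff (k % n) ≠ 0 := fun h' => hk (by rw [h', zero_mul])
    have h2 : p.coeff (k / n) ≠ 0 := fun h' => hk (by rw [h', mul_zero])
    refine Finset.mem_image.mpr ⟨(k % n, k / n), Finset.mem_product.mpr
      ⟨Polynomial.mem_support_iff.mpr h1, Polynomial.mem_support_iff.mpr h2⟩, ?_⟩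
    simp [Nat.mod_add_div]
  have hmem_lt : ∀ i ∈ f.support, i < n := fun i hi =>
    lt_of_le_of_lt (Polynomial.le_natDegree_of_mem_supp i hi) h
  have hmoddiv : ∀ i j : ℕ, i < n → (i + n * j) % n = i ∧ (i + n * j) / n = j := by
    intro i j hi
    constructor
    · rw [Nat.add_mul_mod_self_left, Nat.mod_eq_of_lt hi]
    · rw [Nat.add_mul_div_left _ _ hn, Nat.div_eq_of_lt hi, zero_add]
  have hinj : ∀ a ∈ f.support ×ˢ p.support, ∀ b ∈ f.support ×ˢ p.support,
      a.1 + n * a.2 = b.1 + n * b.2 → a = b := by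
    intro a ha b hb hab
    obtain ⟨haf, _⟩ := Finset.mem_product.mp ha
    obtain ⟨hbf, _⟩ := Finset.mem_product.mp hb
    obtain ⟨ham, had⟩ := hmoddiv a.1 a.2 (hmem_lt _ haf)
    obtain ⟨hbm, hbd⟩ := hmoddiv b.1 b.2 (hmem_lt _ hbf)
    have h1 : a.1 = b.1 := by rw [← ham, ← hbm, hab]
    have h2 : a.2 = b.2 := by rw [← had, ← hbd, hab]
    exact Prod.ext h1 h2
  rw [l1_eq_sum _ T hsub, hT, Finset.sum_image hinj]
  have hcong : ∀ ij ∈ f.support ×ˢ p.support,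
      ‖(f * p.comp (X ^ n)).coeff (ij.1 + n * ij.2)‖ =
      ‖f.coeff ij.1‖ * ‖p.coeff ij.2‖ := by
    intro ij hij
    obtain ⟨hif, _⟩ := Finset.mem_product.mp hij
    obtain ⟨hm, hd⟩ := hmoddiv ij.1 ij.2 (hmem_lt _ hif)
    rw [coeff_mul_comp_X_pow f p n h, hm, hd, norm_mul]
  rw [Finset.sum_congr rfl hcong, Finset.sum_product]
  unfold l1
  rw [Finset.sum_mul_sum]

theorem stmt_11 (p : Polynomial ℂ) (hp : l1 p = 1)
    (w : ℕ → Polynomial ℂ) (h0 : w 0 = p)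
    (hrec : ∀ l, w (l + 1) = w l * p.comp (X ^ (4 * (w l).natDegree + 1))) :
    ∀ l : ℕ, l1 (w l) = 1 ∧ (w l).eval 1 = (p.eval 1) ^ (l + 1) ∧
      (⨆ x : Set.Icc (-1 : ℝ) 1, ‖(w l).eval ((x : ℝ) : ℂ)‖) ≤
        (⨆ x : Set.Icc (-1 : ℝ) 1, ‖p.eval ((x : ℝ) : ℂ)‖) ^ (l + 1) := by
  haveI : Nonempty (Set.Icc (-1 : ℝ) 1) := ⟨⟨0, by norm_num⟩⟩
  have hbdd : ∀ q : Polynomial ℂ,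
      BddAbove (Set.range fun x : Set.Icc (-1 : ℝ) 1 => ‖q.eval ((x : ℝ) : ℂ)‖) := by
    intro q
    have hc : Continuous fun x : ℝ => ‖q.eval ((x : ℝ) : ℂ)‖ :=
      continuous_norm.comp ((q.continuous_aeval.comp Complex.continuous_ofReal))
    have := (isCompact_Icc.image (f := fun x : ℝ => ‖q.eval ((x : ℝ) : ℂ)‖)
      hc (s := Set.Icc (-1 : ℝ) 1)).bddAbove
    rwa [show ((fun x : ℝ => ‖q.eval ((x : ℝ) : ℂ)‖) '' Set.Icc (-1 : ℝ) 1) =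
      Set.range fun x : Set.Icc (-1 : ℝ) 1 => ‖q.eval ((x : ℝ) : ℂ)‖ from
      (Set.image_eq_range _ _)] at this
  set S := ⨆ x : Set.Icc (-1 : ℝ) 1, ‖p.eval ((x : ℝ) : ℂ)‖ with hS
  have hS0 : 0 ≤ S := Real.iSup_nonneg fun x => norm_nonneg _
  intro l
  induction l with
  | zero =>
    refine ⟨by rw [h0, hp], by rw [h0, pow_one], ?_⟩
    rw [pow_one, h0]
  | succ l ih =>
    obtain ⟨ih1, ih2, ih3⟩ := ih
    have hdn : (w l).natDegree < 4 * (w l).natDegree + 1 := by omega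
    refine ⟨?_, ?_, ?_⟩
    · rw [hrec, l1_mul_comp _ _ _ hdn, ih1, hp, one_mul]
    · rw [hrec, eval_mul, eval_comp, eval_pow, eval_X, one_pow, ih2]; ring
    · apply ciSup_le
      intro x
      rw [hrec, eval_mul, eval_comp, eval_pow, eval_X, norm_mul]
      set n := 4 * (w l).natDegree + 1 with hn
      have hx : ((x : ℝ) : ℂ) ^ n = ((((x : ℝ) ^ n : ℝ)) : ℂ) := by push_cast; ring
      have hxm : ((x : ℝ) ^ n) ∈ Set.Icc (-1 : ℝ) 1 := by
        have habs : |(x : ℝ) ^ n| ≤ 1 := by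
          rw [abs_pow]
          exact pow_le_one₀ (abs_nonneg _) (abs_le.mpr ⟨x.2.1, x.2.2⟩)
        exact abs_le.mp habs
      rw [hx]
      calc ‖(w l).eval ((x : ℝ) : ℂ)‖ *
            ‖p.eval ((((x : ℝ) ^ n : ℝ)) : ℂ)‖
          ≤ S ^ (l + 1) * S := by
            apply mul_le_mul
            · exact le_trans (le_ciSup (hbdd (w l)) x) ih3
            · exact le_ciSup (hbdd p) ⟨(x : ℝ) ^ n, hxm⟩
            · exact norm_nonneg _
            · exact pow_nonneg hS0 _
        _ = S ^ (l + 1 + 1) := by ring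
end

section
/- Let $b > \frac{-5+4\sqrt{2}}{7}$, $b \le \alpha \le 1$, and let $q$ be a complex polynomial with $q(1) = q(-1) = q(0) = 0$ and $\sup_{x\in[-1,1]}|q(x)| \le \varepsilon$ where $\varepsilon < b - \frac{1}{8}\frac{(1-b)^2}{1+b}$. Define $p_\alpha(z) = \frac{1}{2}(\alpha+b)z^4 - \frac{1}{2}(\alpha-b)z^2 + (1-\alpha)q(z)$. Then $p_\alpha(1) = p_\alpha(-1) = b$ and $|p_\alpha(x_0)| < b$ for $x_0 = \sqrt{\frac{\alpha-b}{2(\alpha+b)}}$. -/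
open Polynomial

theorem stmt_16 (b α ε : ℝ) (hb0 : b > (-5 + 4 * Real.sqrt 2) / 7)
    (hbα : b ≤ α) (hα : α ≤ 1)
    (q : Polynomial ℂ) (hq1 : q.eval 1 = 0) (hqm1 : q.eval (-1) = 0) (hq0 : q.eval 0 = 0)
    (hqε : ∀ x ∈ Set.Icc (-1 : ℝ) 1, ‖q.eval ((x : ℝ) : ℂ)‖ ≤ ε)
    (hε : ε < b - (1 / 8) * (1 - b) ^ 2 / (1 + b))
    (pα : ℂ → ℂ)
    (hpα : ∀ z, pα z = ((α : ℂ) + b) / 2 * z ^ 4 - ((α : ℂ) - b) / 2 * z ^ 2 +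
      (1 - (α : ℂ)) * q.eval z)
    (x₀ : ℝ) (hx₀ : x₀ = Real.sqrt ((α - b) / (2 * (α + b)))) :
    pα 1 = (b : ℂ) ∧ pα (-1) = (b : ℂ) ∧ ‖pα ((x₀ : ℝ) : ℂ)‖ < b := by
  have hs2 : Real.sqrt 2 > 1.25 := by
    nlinarith [Real.sq_sqrt (show (0:ℝ) ≤ 2 by norm_num), Real.sqrt_nonneg 2]
  have hbpos : 0 < b := by nlinarith
  have hαb : 0 < α + b := by linarith
  have hεnn : 0 ≤ ε := by
    have := hqε 0 (by constructor <;> norm_num)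
    simpa [hq0] using this
  refine ⟨?_, ?_, ?_⟩
  · rw [hpα 1, hq1]; push_cast; ring
  · rw [hpα (-1), hqm1]; push_cast; ring
  · -- main estimate
    have hx₀sq : (x₀ : ℝ) ^ 2 = (α - b) / (2 * (α + b)) := by
      rw [hx₀, Real.sq_sqrt]
      apply div_nonneg (by linarith) (by positivity)
    have hx₀mem : x₀ ∈ Set.Icc (-1 : ℝ) 1 := by
      constructor
      · rw [hx₀]; have := Real.sqrt_nonneg ((α - b) / (2 * (α + b))); linarith
      · rw [hx₀]
        rw [show (1:ℝ) = Real.sqrt 1 by simp]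
        apply Real.sqrt_le_sqrt
        rw [div_le_one (by positivity)]
        linarith
    set A : ℝ := (α - b) ^ 2 / (8 * (α + b)) with hA
    have hval : pα ((x₀ : ℝ) : ℂ) = ((-A : ℝ) : ℂ) + (1 - (α : ℂ)) * q.eval ((x₀ : ℝ) : ℂ) := by
      rw [hpα]
      have : ((x₀ : ℝ) : ℂ) ^ 2 = (((α - b) / (2 * (α + b)) : ℝ) : ℂ) := by
        push_cast [← hx₀sq]; ring
      have h4 : ((x₀ : ℝ) : ℂ) ^ 4 = (((α - b) / (2 * (α + b)) : ℝ) : ℂ) ^ 2 := by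
        rw [show (4:ℕ) = 2 * 2 by norm_num, pow_mul, this]
      rw [h4, this]
      have hAr : (-A : ℝ) = (α + b) / 2 * ((α - b) / (2 * (α + b))) ^ 2 -
          (α - b) / 2 * ((α - b) / (2 * (α + b))) := by
        rw [hA]; field_simp; ring
      have hAc : ((-A : ℝ) : ℂ) = ((α : ℂ) + b) / 2 * (((α - b) / (2 * (α + b)) : ℝ) : ℂ) ^ 2 -
          ((α : ℂ) - b) / 2 * (((α - b) / (2 * (α + b)) : ℝ) : ℂ) := by
        rw [hAr]; push_cast; ring
      rw [hAc]
    rw [hval]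
    have hq' : ‖q.eval ((x₀ : ℝ) : ℂ)‖ ≤ ε := hqε x₀ hx₀mem
    have htri : ‖((-A : ℝ) : ℂ) + (1 - (α : ℂ)) * q.eval ((x₀ : ℝ) : ℂ)‖ ≤
        A + (1 - α) * ε := by
      calc ‖((-A : ℝ) : ℂ) + (1 - (α : ℂ)) * q.eval ((x₀ : ℝ) : ℂ)‖
          ≤ ‖((-A : ℝ) : ℂ)‖ + ‖(1 - (α : ℂ)) * q.eval ((x₀ : ℝ) : ℂ)‖ :=
            norm_add_le _ _
        _ = |(-A : ℝ)| + ‖(1 - (α : ℂ))‖ * ‖q.eval ((x₀ : ℝ) : ℂ)‖ := by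
            rw [Complex.norm_real, Real.norm_eq_abs, norm_mul]
        _ ≤ A + (1 - α) * ε := by
            have h1 : |(-A : ℝ)| = A := by
              rw [abs_neg, abs_of_nonneg]; positivity
            have h2 : ‖(1 - (α : ℂ))‖ = 1 - α := by
              rw [show (1 - (α : ℂ)) = (((1 - α : ℝ)) : ℂ) by push_cast; ring,
                Complex.norm_real, Real.norm_eq_abs, abs_of_nonneg (by linarith)]
            rw [h1, h2]
            have := mul_le_mul_of_nonneg_left hq' (show (0:ℝ) ≤ 1 - α by linarith)
            linarith
    have hAle : A ≤ (1 - b) ^ 2 / (8 * (1 + b)) := by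
      rw [hA, div_le_div_iff₀ (by positivity) (by positivity)]
      nlinarith [sq_nonneg (α - b), sq_nonneg (1 - α), mul_nonneg (sub_nonneg.2 hbα) (sub_nonneg.2 hα)]
    have hfin : A + (1 - α) * ε < b := by
      have h3 : (1 - α) * ε ≤ ε := by nlinarith
      have h4 : (1 - b) ^ 2 / (8 * (1 + b)) = (1 / 8) * (1 - b) ^ 2 / (1 + b) := by
        field_simp
      linarith [hAle, hε, h4 ▸ hAle]
    linarith
end
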